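/- In any M-algebra (X, M), for all α, β ∈ M: if the composite map γ : x ↦ β(α(x)) (first α, then β) belongs to M, then FP(γ) = FP(α) ∩ FP(β). -/

import Mathlib

/-- `α` preserves `β`: `α` maps the fixpoints of `β` into the fixpoints of `β`. -/
def Preserves {X : Type*} (α β : X → X) : Prop :=
  ∀ x, β x = x → β (α x) = α x

/-- `ν` is a negation of `α`: `FP ν = Z α` and `Z ν = FP α`. -/
def IsNegation {X : Type*} [Zero X] (ν α : X → X) : Prop :=
  (∀ x, ν x = x ↔ α x = 0) ∧ (∀ x, ν x = 0 ↔ α x = x)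

/-- Two maps commute. -/
def Commutes {X : Type*} (α β : X → X) : Prop :=
  ∀ x, α (β x) = β (α x)

/-- An M-algebra on a type `X` with a distinguished illegitimate state `0`. -/
structure MAlgebra (X : Type*) [Zero X] where
  M : Set (X → X)
  illegitimate : ∀ α ∈ M, α 0 = 0
  idempotence : ∀ α ∈ M, ∀ x : X, α (α x) = α x
  composition : ∀ α ∈ M, ∀ β ∈ M, Preserves α β → (fun x => α (β x)) ∈ M
  interference : ∀ α ∈ M, ∀ β ∈ M, ∀ x : X,
    α x = x → β (α (β x)) = α (β x) → α (β x) = β x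
  cumulativity : ∀ α ∈ M, ∀ β ∈ M, ∀ x : X,
    β (α x) = α x → α (β x) = β x → α x = β x
  negation : ∀ α ∈ M, ∃ ν ∈ M, IsNegation ν α

theorem malgebra_comp_fixpoints {X : Type*} [Zero X] (A : MAlgebra X)
    {α β : X → X} (hα : α ∈ A.M) (hβ : β ∈ A.M)
    (hcomp : (fun x => β (α x)) ∈ A.M) :
    {x : X | β (α x) = x} = {x : X | α x = x} ∩ {x : X | β x = x} := by
  ext x
  simp only [Set.mem_setOf_eq, Set.mem_inter_iff]
  constructor
  · intro hx
    obtain ⟨ν, hν, hν1, hν2⟩ := A.negation α hα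
    -- ν (ν x) = ν x, so α (ν x) = 0
    have hανx : α (ν x) = 0 := (hν1 (ν x)).mp (A.idempotence ν hν x)
    -- hence γ (ν x) = β 0 = 0
    have hγνx : β (α (ν x)) = 0 := by rw [hανx]; exact A.illegitimate β hβ
    -- interference with a := γ, b := ν
    have hint := A.interference _ hcomp ν hν x hx
    have : β (α (ν x)) = ν x := by
      apply hint
      rw [hγνx]
      exact A.illegitimate ν hν
    have hνx0 : ν x = 0 := by rw [← this, hγνx]
    have hαx : α x = x := (hν2 x).mp hνx0
    refine ⟨hαx, ?_⟩
    calc β x = β (α x) := by rw [hαx]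
    _ = x := hx
  · rintro ⟨h1, h2⟩
    rw [h1, h2]
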